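/- Let x* ∈ ℝ_{>0}^n be a complex balanced steady state of a GLV system generated by (G,κ). Then the function V(x) = Σ_{i=1}^n (log x_i - log x*_i)^2 is nonincreasing along the flow: for all x ∈ ℝ_{>0}^n, ⟨diag(x) f(x), ∇V(x)⟩ ≤ 0, with equality iff log x - log x* ∈ S^⊥. -/

import Mathlib

open scoped RealInnerProductSpace

lemma exp_ineq' (a b : ℝ) : Real.exp a * (b - a) ≤ Real.exp b - Real.exp a := by
  have h1 : Real.exp b = Real.exp a * Real.exp (b - a) := by
    rw [← Real.exp_add]; ring_nf
  nlinarith [Real.add_one_le_exp (b - a), Real.exp_pos a]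

lemma exp_eq_iff' (a b : ℝ) :
    Real.exp a * (b - a) = Real.exp b - Real.exp a ↔ a = b := by
  constructor
  · intro h
    by_contra hne
    have h1 : Real.exp b = Real.exp a * Real.exp (b - a) := by
      rw [← Real.exp_add]; ring_nf
    have h2 := Real.add_one_lt_exp (x := b - a) (by intro hc; exact hne (by linarith))
    nlinarith [Real.exp_pos a]
  · rintro rfl; ring

theorem glv_Lyapunov {n m : ℕ}
    (y : Fin m → EuclideanSpace ℝ (Fin n))
    (E : Finset (Fin m × Fin m)) (hE : ∀ e ∈ E, e.1 ≠ e.2)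
    (κ : Fin m × Fin m → ℝ) (hκ : ∀ e ∈ E, 0 < κ e)
    (S : Submodule ℝ (EuclideanSpace ℝ (Fin n)))
    (hS : S = Submodule.span ℝ {v : EuclideanSpace ℝ (Fin n) | ∃ e ∈ E, v = y e.2 - y e.1})
    (f : EuclideanSpace ℝ (Fin n) → EuclideanSpace ℝ (Fin n))
    (hf : ∀ x, f x = ∑ e ∈ E, (κ e * ∏ k, x k ^ (y e.1 k)) • (y e.2 - y e.1))
    (xs : EuclideanSpace ℝ (Fin n)) (hxs : ∀ k, 0 < xs k)
    (hcb : ∀ i : Fin m,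
      ∑ e ∈ E.filter (fun e => e.1 = i), κ e * ∏ k, xs k ^ (y i k) =
      ∑ e ∈ E.filter (fun e => e.2 = i), κ e * ∏ k, xs k ^ (y e.1 k))
    (x : EuclideanSpace ℝ (Fin n)) (hx : ∀ k, 0 < x k)
    -- v = diag(x) f(x), g = ∇V(x), w = log x - log x*
    (v g w : EuclideanSpace ℝ (Fin n))
    (hv : ∀ k, v k = x k * f x k)
    (hg : ∀ k, g k = 2 * (Real.log (x k) - Real.log (xs k)) / x k)
    (hw : ∀ k, w k = Real.log (x k) - Real.log (xs k)) :
    ⟪v, g⟫ ≤ 0 ∧ (⟪v, g⟫ = 0 ↔ w ∈ Sᗮ) := by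
  set a : Fin m → ℝ := fun i => ⟪y i, w⟫ with ha
  set c : Fin m × Fin m → ℝ := fun e => κ e * ∏ k, xs k ^ (y e.1 k) with hc
  -- step 1: ⟪v, g⟫ = 2 * ⟪f x, w⟫
  have step1 : ⟪v, g⟫ = 2 * ⟪f x, w⟫ := by
    simp only [PiLp.inner_apply, RCLike.inner_apply, conj_trivial, Finset.mul_sum]
    refine Finset.sum_congr rfl fun k _ => ?_
    have hxk : x k ≠ 0 := (hx k).ne'
    rw [hv, hg, hw]
    field_simp
  -- step 2: product identity
  have step2 : ∀ i : Fin m, (∏ k, x k ^ (y i k)) = (∏ k, xs k ^ (y i k)) * Real.exp (a i) := by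
    intro i
    have hx' : ∀ k, x k ^ (y i k) = xs k ^ (y i k) * Real.exp (y i k * w k) := by
      intro k
      rw [Real.rpow_def_of_pos (hx k), Real.rpow_def_of_pos (hxs k), ← Real.exp_add]
      congr 1
      rw [hw k]
      ring
    simp only [hx', Finset.prod_mul_distrib, ← Real.exp_sum]
    have : a i = ∑ k, y i k * w k := by
      simp [ha, PiLp.inner_apply, RCLike.inner_apply, conj_trivial]
      exact Finset.sum_congr rfl fun k _ => mul_comm _ _
    rw [this]
  -- step 3: ⟪f x, w⟫ as edge sum
  have step3 : ⟪f x, w⟫ = ∑ e ∈ E, c e * Real.exp (a e.1) * (a e.2 - a e.1) := by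
    rw [hf, sum_inner]
    refine Finset.sum_congr rfl fun e he => ?_
    rw [real_inner_smul_left, step2 e.1, inner_sub_left]
    simp only [ha, hc]
    ring
  -- step 4: zero sum from complex balance
  have step4 : ∑ e ∈ E, c e * Real.exp (a e.2) = ∑ e ∈ E, c e * Real.exp (a e.1) := by
    rw [← Finset.sum_fiberwise E (fun e => e.2) (fun e => c e * Real.exp (a e.2)),
        ← Finset.sum_fiberwise E (fun e => e.1) (fun e => c e * Real.exp (a e.1))]
    refine Finset.sum_congr rfl fun i _ => ?_
    have h2 : ∑ e ∈ E.filter (fun e => e.2 = i), c e * Real.exp (a e.2)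
        = (∑ e ∈ E.filter (fun e => e.2 = i), c e) * Real.exp (a i) := by
      rw [Finset.sum_mul]
      refine Finset.sum_congr rfl fun e he => ?_
      rw [(Finset.mem_filter.mp he).2]
    have h1 : ∑ e ∈ E.filter (fun e => e.1 = i), c e * Real.exp (a e.1)
        = (∑ e ∈ E.filter (fun e => e.1 = i), κ e * ∏ k, xs k ^ (y i k)) * Real.exp (a i) := by
      rw [Finset.sum_mul]
      refine Finset.sum_congr rfl fun e he => ?_
      rw [hc]
      simp only
      rw [(Finset.mem_filter.mp he).2]
    rw [h2, h1, hcb i]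
  have hcpos : ∀ e ∈ E, 0 < c e := fun e he =>
    mul_pos (hκ e he) (Finset.prod_pos fun k _ => Real.rpow_pos_of_pos (hxs k) _)
  set D : Fin m × Fin m → ℝ := fun e =>
    c e * (Real.exp (a e.1) * (a e.2 - a e.1) - (Real.exp (a e.2) - Real.exp (a e.1))) with hD
  have hDexp : ∀ e, D e = c e * Real.exp (a e.1) * (a e.2 - a e.1)
      - c e * Real.exp (a e.2) + c e * Real.exp (a e.1) := fun e => by
    simp only [hD]; ring
  have hmain : ⟪v, g⟫ = 2 * ∑ e ∈ E, D e := by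
    rw [step1, step3]
    congr 1
    simp only [hDexp, Finset.sum_add_distrib, Finset.sum_sub_distrib, step4]
    ring
  have hDnonpos : ∀ e ∈ E, D e ≤ 0 := by
    intro e he
    have h1 := exp_ineq' (a e.1) (a e.2)
    have h2 := hcpos e he
    have h3 := hDexp e
    nlinarith [mul_le_mul_of_nonneg_left h1 h2.le]
  have hDzero : ∀ e ∈ E, (D e = 0 ↔ a e.1 = a e.2) := by
    intro e he
    rw [hD]
    simp only
    rw [mul_eq_zero]
    constructor
    · rintro (h | h)
      · exact absurd h (hcpos e he).ne'
      · exact (exp_eq_iff' (a e.1) (a e.2)).mp (by linarith)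
    · intro h
      right
      rw [sub_eq_zero]
      exact (exp_eq_iff' (a e.1) (a e.2)).mpr h
  have horth : w ∈ Sᗮ ↔ ∀ e ∈ E, a e.1 = a e.2 := by
    constructor
    · intro hwS e he
      have hmem : y e.2 - y e.1 ∈ S := by
        rw [hS]; exact Submodule.subset_span ⟨e, he, rfl⟩
      have := (Submodule.mem_orthogonal S w).mp hwS _ hmem
      rw [inner_sub_left] at this
      have : a e.2 - a e.1 = 0 := this
      linarith
    · intro h
      rw [hS, Submodule.mem_orthogonal]
      intro u hu
      induction hu using Submodule.span_induction with
      | mem u hu => obtain ⟨e, he, rfl⟩ := hu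
                    rw [inner_sub_left]
                    have := h e he
                    simp only [ha] at this ⊢
                    linarith
      | zero => simp
      | add u v _ _ hu hv => rw [inner_add_left, hu, hv, add_zero]
      | smul r u _ hu => rw [inner_smul_left, hu, mul_zero]
  refine ⟨?_, ?_⟩
  · rw [hmain]
    have : ∑ e ∈ E, D e ≤ 0 := Finset.sum_nonpos hDnonpos
    linarith
  · rw [hmain, horth]
    constructor
    · intro h
      have hsum : ∑ e ∈ E, D e = 0 := by linarith
      intro e he
      exact (hDzero e he).mp ((Finset.sum_eq_zero_iff_of_nonpos hDnonpos).mp hsum e he)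
    · intro h
      have : ∑ e ∈ E, D e = 0 :=
        Finset.sum_eq_zero fun e he => (hDzero e he).mpr (h e he)
      rw [this]; ring
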